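/- Elementary renewal theorem for Kendall random walks: if H ∈ RV_θ with 0 ≤ θ < α, then x^{-α} R(x) H(x) → (α − θ)(2α − θ)/α² as x → ∞, where R(x) = G(x)/(1−G(x)) + H(x)/(x^α (1−G(x))²). -/

import Mathlib

open MeasureTheory Real Filter Set

/-- Elementary renewal theorem for Kendall random walks: if `H ∈ RV_θ`
with `θ ∈ [0, α)`, then `x^(-α) R(x) H(x) → (α - θ)(2α - θ)/α²`. -/
theorem kendall_elementary_renewal
    (α θ : ℝ) (hα : 0 < α) (hθ0 : 0 ≤ θ) (hθα : θ < α)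
    (ν : Measure ℝ) [IsProbabilityMeasure ν] (hν : ν (Set.Iic 0) = 0)
    (F H G R : ℝ → ℝ)
    (hF : ∀ t, F t = (ν (Set.Iic t)).toReal)
    (hH : ∀ t, H t = ∫ x in Set.Ioc 0 t, x ^ α ∂ν)
    (hG : ∀ t, G t = F t - t ^ (-α) * H t)
    (hR : ∀ t, R t = G t / (1 - G t) + H t / (t ^ α * (1 - G t) ^ 2))
    (hRV : ∀ x : ℝ, 0 < x →
      Tendsto (fun t => H (t * x) / H t) atTop (nhds (x ^ θ))) :
    Tendsto (fun x => x ^ (-α) * R x * H x) atTop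
      (nhds ((α - θ) * (2 * α - θ) / α ^ 2)) := by
  have hα0 : (α:ℝ) ≠ 0 := ne_of_gt hα
  set Hl : ℝ → ENNReal := fun t => ∫⁻ y in Set.Ioc 0 t, ENNReal.ofReal (y ^ α) ∂ν with hHl
  have hrpm : Measurable fun y : ℝ => y ^ α := measurable_id'.pow_const α
  have hmeas : Measurable fun y : ℝ => ENNReal.ofReal (y ^ α) := hrpm.ennreal_ofReal
  have hrpm2 : Measurable fun y : ℝ => y ^ (-α - 1) := measurable_id'.pow_const (-α - 1)
  have hmeas2 : Measurable fun y : ℝ => ENNReal.ofReal (y ^ (-α - 1)) := hrpm2.ennreal_ofReal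
  have hHl_fin : ∀ t, Hl t ≠ ⊤ := by
    intro t
    have hb : Hl t ≤ ENNReal.ofReal (max t 1 ^ α) * ν (Set.Ioc 0 t) := by
      rw [hHl]
      calc ∫⁻ y in Set.Ioc 0 t, ENNReal.ofReal (y ^ α) ∂ν
          ≤ ∫⁻ _y in Set.Ioc 0 t, ENNReal.ofReal (max t 1 ^ α) ∂ν := by
            refine setLIntegral_mono measurable_const (fun y hy => ?_)
            exact ENNReal.ofReal_le_ofReal
              (Real.rpow_le_rpow hy.1.le (hy.2.trans (le_max_left _ _)) hα.le)
        _ = ENNReal.ofReal (max t 1 ^ α) * ν (Set.Ioc 0 t) := setLIntegral_const _ _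
    exact ne_top_of_le_ne_top (by finiteness) hb
  have hHtoReal : ∀ t, H t = (Hl t).toReal := by
    intro t
    rw [hH t, integral_eq_lintegral_of_nonneg_ae
      ((ae_restrict_iff' measurableSet_Ioc).2
        (ae_of_all _ fun y hy => Real.rpow_nonneg hy.1.le α))
      hrpm.aestronglyMeasurable]
  have hHl_mono : Monotone Hl := fun s t hst =>
    lintegral_mono_set (Set.Ioc_subset_Ioc_right hst)
  have hHmono : Monotone H := by
    intro s t hst
    rw [hHtoReal s, hHtoReal t]
    exact ENNReal.toReal_mono (hHl_fin t) (hHl_mono hst)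
  have hHnn : ∀ t, 0 ≤ H t := fun t => by rw [hHtoReal t]; exact ENNReal.toReal_nonneg
  have hHmeas : Measurable H := hHmono.measurable
  -- positivity of H for large arguments
  have hIoi0 : ν (Set.Ioi (0:ℝ)) = 1 := by
    have h1 : ν (Set.Iic (0:ℝ))ᶜ = ν Set.univ - ν (Set.Iic 0) :=
      measure_compl measurableSet_Iic (measure_ne_top ν _)
    rw [Set.compl_Iic] at h1
    simp [h1, hν]
  obtain ⟨N, hN⟩ : ∃ N : ℕ, 0 < ν (Set.Ioc (0:ℝ) N) := by
    by_contra h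
    push_neg at h
    have h0 : ∀ N : ℕ, ν (Set.Ioc (0:ℝ) N) = 0 := fun N => le_antisymm (h N) zero_le
    have hU : Set.Ioi (0:ℝ) = ⋃ n : ℕ, Set.Ioc (0:ℝ) n := by
      ext y
      simp only [Set.mem_Ioi, Set.mem_iUnion, Set.mem_Ioc]
      constructor
      · intro hy
        obtain ⟨n, hn⟩ := exists_nat_ge y
        exact ⟨n, hy, hn⟩
      · rintro ⟨n, hy, -⟩; exact hy
    have hz : ν (Set.Ioi (0:ℝ)) = 0 := by
      rw [hU]
      exact measure_iUnion_null fun n => h0 n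
    rw [hIoi0] at hz; simp at hz
  have hHlNpos : 0 < Hl N := by
    have hsupp : 0 < (ν.restrict (Set.Ioc (0:ℝ) N))
        (Function.support fun y => ENNReal.ofReal (y ^ α)) := by
      have hsub : Set.Ioc (0:ℝ) N ⊆ Function.support fun y => ENNReal.ofReal (y ^ α) := by
        intro y hy
        simp only [Function.mem_support, ne_eq, ENNReal.ofReal_eq_zero, not_le]
        exact Real.rpow_pos_of_pos hy.1 α
      calc (0:ENNReal) < ν (Set.Ioc (0:ℝ) N) := hN
        _ = (ν.restrict (Set.Ioc (0:ℝ) N)) (Set.Ioc (0:ℝ) N) := by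
            rw [Measure.restrict_apply_self]
        _ ≤ _ := measure_mono hsub
    exact (lintegral_pos_iff_support hmeas).2 hsupp
  have hHNpos : 0 < H (N:ℝ) := by
    rw [hHtoReal]; exact ENNReal.toReal_pos (ne_of_gt hHlNpos) (hHl_fin _)
  -- Potter-type bounds
  set θ' : ℝ := (θ + α) / 2 with hθ'def
  have hθ'pos : 0 < θ' := by rw [hθ'def]; linarith
  have hθθ' : θ < θ' := by rw [hθ'def]; linarith
  have hθ'α : θ' < α := by rw [hθ'def]; linarith
  set q : ℝ := (2:ℝ) ^ θ' with hqdef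
  have hq1 : 1 < q := (Real.one_lt_rpow_iff_of_pos two_pos).2 (Or.inl ⟨one_lt_two, hθ'pos⟩)
  have hqpos : 0 < q := lt_trans one_pos hq1
  have h2θq : (2:ℝ) ^ θ < q := Real.rpow_lt_rpow_of_exponent_lt one_lt_two hθθ'
  have hev : ∀ᶠ t in atTop, H (t * 2) / H t ≤ q :=
    ((hRV 2 two_pos).eventually_lt_const h2θq).mono fun t ht => ht.le
  obtain ⟨a, ha⟩ := eventually_atTop.1 hev
  set x₀ : ℝ := max a (max (N:ℝ) 1) with hx₀def
  have hx₀N : (N:ℝ) ≤ x₀ := le_max_of_le_right (le_max_left _ _)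
  have hx₀1 : (1:ℝ) ≤ x₀ := le_max_of_le_right (le_max_right _ _)
  have hx₀pos : 0 < x₀ := lt_of_lt_of_le one_pos hx₀1
  have hHpos : ∀ t, x₀ ≤ t → 0 < H t := fun t ht =>
    lt_of_lt_of_le hHNpos (hHmono (le_trans hx₀N ht))
  have hdouble : ∀ t, x₀ ≤ t → H (2 * t) ≤ q * H t := by
    intro t ht
    have h1 := ha t (le_trans (le_max_left _ _) ht)
    have h2 := hHpos t ht
    rw [div_le_iff₀ h2] at h1
    calc H (2*t) = H (t*2) := by rw [mul_comm]
      _ ≤ q * H t := h1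
  have hiter : ∀ n : ℕ, ∀ t, x₀ ≤ t → H (2 ^ n * t) ≤ q ^ n * H t := by
    intro n
    induction n with
    | zero => intro t ht; simp
    | succ n ih =>
      intro t ht
      have htpos : 0 < t := lt_of_lt_of_le hx₀pos ht
      have h2n : (1:ℝ) ≤ 2 ^ n := one_le_pow₀ one_le_two
      have htn : x₀ ≤ 2 ^ n * t := le_trans ht (le_mul_of_one_le_left htpos.le h2n)
      have e : (2:ℝ) ^ (n+1) * t = 2 * (2 ^ n * t) := by ring
      calc H (2 ^ (n+1) * t) = H (2 * (2 ^ n * t)) := by rw [e]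
        _ ≤ q * H (2 ^ n * t) := hdouble _ htn
        _ ≤ q * (q ^ n * H t) := mul_le_mul_of_nonneg_left (ih t ht) hqpos.le
        _ = q ^ (n+1) * H t := by ring
  have hpotter : ∀ x, x₀ ≤ x → ∀ u : ℝ, 1 ≤ u → H (u * x) ≤ q * u ^ θ' * H x := by
    intro x hx u hu
    have hxpos : 0 < x := lt_of_lt_of_le hx₀pos hx
    have hupos : 0 < u := lt_of_lt_of_le one_pos hu
    obtain ⟨n, hun, hn2u⟩ : ∃ n : ℕ, u ≤ 2 ^ n ∧ (2:ℝ) ^ n ≤ 2 * u := by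
      have hex : ∃ n : ℕ, u ≤ 2 ^ n := by
        obtain ⟨m, hm⟩ := pow_unbounded_of_one_lt u (one_lt_two (α := ℝ))
        exact ⟨m, hm.le⟩
      classical
      let n := Nat.find hex
      refine ⟨n, Nat.find_spec hex, ?_⟩
      rcases Nat.eq_zero_or_pos n with h0 | h0
      · rw [h0]; simpa using by linarith
      · have hlt : ¬ u ≤ 2 ^ (n - 1) := Nat.find_min hex (Nat.sub_lt h0 one_pos)
        push_neg at hlt
        have : (2:ℝ) ^ n = 2 * 2 ^ (n - 1) := by
          rw [← pow_succ']
          congr 1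
          omega
        rw [this]
        nlinarith [hlt]
    have h1 : H (u * x) ≤ H (2 ^ n * x) :=
      hHmono (mul_le_mul_of_nonneg_right hun hxpos.le)
    have h3 : (q:ℝ) ^ n = ((2:ℝ) ^ n) ^ θ' := by
      rw [hqdef, ← Real.rpow_natCast ((2:ℝ) ^ θ') n, ← Real.rpow_natCast (2:ℝ) n,
        ← Real.rpow_mul (by norm_num), ← Real.rpow_mul (by norm_num), mul_comm]
    have h4 : ((2:ℝ) ^ n) ^ θ' ≤ (2 * u) ^ θ' :=
      Real.rpow_le_rpow (by positivity) hn2u hθ'pos.le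
    have h5 : ((2:ℝ) * u) ^ θ' = q * u ^ θ' := by
      rw [Real.mul_rpow (by norm_num) hupos.le, hqdef]
    calc H (u*x) ≤ q ^ n * H x := le_trans h1 (hiter n x hx)
      _ ≤ (2*u) ^ θ' * H x := by
          rw [h3]
          exact mul_le_mul_of_nonneg_right h4 (hHnn x)
      _ = q * u ^ θ' * H x := by rw [h5]
  -- x^(-α) H x → 0
  set C : ℝ := q * H x₀ / x₀ ^ θ' with hC
  have hbound : ∀ x, x₀ ≤ x → x ^ (-α) * H x ≤ C * x ^ (θ' - α) := by
    intro x hx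
    have hxpos : 0 < x := lt_of_lt_of_le hx₀pos hx
    have hu : 1 ≤ x / x₀ := (one_le_div hx₀pos).2 hx
    have h1 : H x ≤ q * (x / x₀) ^ θ' * H x₀ := by
      have h := hpotter x₀ le_rfl (x / x₀) hu
      rwa [div_mul_cancel₀ _ (ne_of_gt hx₀pos)] at h
    have h2 : (x / x₀) ^ θ' = x ^ θ' / x₀ ^ θ' := Real.div_rpow hxpos.le hx₀pos.le θ'
    have hxa : (0:ℝ) < x ^ (-α) := Real.rpow_pos_of_pos hxpos _
    calc x ^ (-α) * H x ≤ x ^ (-α) * (q * (x ^ θ' / x₀ ^ θ') * H x₀) := by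
          rw [h2] at h1; exact mul_le_mul_of_nonneg_left h1 hxa.le
      _ = C * (x ^ (-α) * x ^ θ') := by rw [hC]; ring
      _ = C * x ^ (θ' - α) := by
          rw [← Real.rpow_add hxpos, show -α + θ' = θ' - α from by ring]
  have htend0 : Tendsto (fun x : ℝ => C * x ^ (θ' - α)) atTop (nhds 0) := by
    have h := (tendsto_rpow_neg_atTop (show 0 < α - θ' by linarith)).const_mul C
    rw [mul_zero] at h
    refine h.congr fun x => ?_
    rw [show -(α - θ') = θ' - α from by ring]
  have hHsmall : Tendsto (fun x => x ^ (-α) * H x) atTop (nhds 0) := by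
    refine tendsto_of_tendsto_of_tendsto_of_le_of_le' tendsto_const_nhds htend0 ?_ ?_
    · filter_upwards [eventually_ge_atTop (0:ℝ)] with x hx
      exact mul_nonneg (Real.rpow_nonneg hx _) (hHnn x)
    · filter_upwards [eventually_ge_atTop x₀] with x hx using hbound x hx
  -- tail of the measure
  have hFT : ∀ x : ℝ, F x + (ν (Set.Ioi x)).toReal = 1 := by
    intro x
    have h1 : ν (Set.Iic x) + ν (Set.Ioi x) = 1 := by
      have h2 := measure_add_measure_compl (μ := ν) (measurableSet_Iic (a := x))
      rw [Set.compl_Iic] at h2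
      rw [h2, measure_univ]
    rw [hF, ← ENNReal.toReal_add (measure_ne_top ν _) (measure_ne_top ν _), h1,
      ENNReal.toReal_one]
  have hTtend : Tendsto (fun x => (ν (Set.Ioi x)).toReal) atTop (nhds 0) := by
    have h1 : Tendsto (fun x : ℝ => ν (Set.Iic x)) atTop (nhds (ν Set.univ)) :=
      tendsto_measure_Iic_atTop ν
    rw [measure_univ] at h1
    have h2 : Tendsto F atTop (nhds 1) := by
      have h3 := (ENNReal.tendsto_toReal (ENNReal.one_ne_top)).comp h1
      rw [ENNReal.toReal_one] at h3
      exact h3.congr fun x => (hF x).symm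
    have h3 : (fun x => (ν (Set.Ioi x)).toReal) = fun x => 1 - F x := by
      funext x; have := hFT x; linarith
    rw [h3]
    have h4 := Tendsto.sub (tendsto_const_nhds (x := (1:ℝ))) h2
    rw [sub_self] at h4
    exact h4
  have h1G : ∀ x : ℝ, 1 - G x = (ν (Set.Ioi x)).toReal + x ^ (-α) * H x := by
    intro x
    rw [hG]
    have := hFT x
    linarith
  have hGtend : Tendsto G atTop (nhds 1) := by
    have h1 : Tendsto (fun x => 1 - G x) atTop (nhds 0) := by
      have h := hTtend.add hHsmall
      rw [add_zero] at h
      exact h.congr fun x => (h1G x).symm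
    have h2 := Tendsto.sub (tendsto_const_nhds (x := (1:ℝ))) h1
    rw [sub_zero] at h2
    refine h2.congr fun x => by ring
  -- the power integral
  have hpow_int : ∀ a : ℝ, 0 < a →
      ∫⁻ u in Set.Ioi a, ENNReal.ofReal (u ^ (-α - 1)) = ENNReal.ofReal (a ^ (-α) / α) := by
    intro a ha
    rw [← ofReal_integral_eq_lintegral_ofReal
      (integrableOn_Ioi_rpow_of_lt (by linarith) ha)
      ((ae_restrict_iff' measurableSet_Ioi).2
        (ae_of_all _ fun y hy => Real.rpow_nonneg (le_of_lt (lt_trans ha hy)) _))]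
    rw [integral_Ioi_rpow_of_lt (by linarith) ha]
    congr 1
    rw [show -α - 1 + 1 = -α from by ring]
    rw [neg_div, div_neg, neg_neg]
  have hposae : ∀ᵐ y ∂ν, (0:ℝ) < y := by
    have h1 : ∀ᵐ y ∂ν, y ∉ Set.Iic (0:ℝ) := (measure_eq_zero_iff_ae_notMem).1 hν
    exact h1.mono fun y hy => not_le.1 hy
  -- the key Fubini identity
  have hstar : ∀ x : ℝ, 0 < x →
      ∫⁻ u in Set.Ioi 1, ENNReal.ofReal (u ^ (-α - 1)) * Hl (u * x)
        = ENNReal.ofReal (1 / α) * (Hl x + ENNReal.ofReal (x ^ α) * ν (Set.Ioi x)) := by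
    intro x hx
    have hS : MeasurableSet { p : ℝ × ℝ | 0 < p.2 ∧ p.2 ≤ p.1 * x } := by
      rw [Set.setOf_and]
      exact (measurableSet_lt measurable_const measurable_snd).inter
        (measurableSet_le measurable_snd (measurable_fst.mul_const x))
    set k : ℝ → ℝ → ENNReal := fun u y =>
      ENNReal.ofReal (u ^ (-α - 1)) *
        ({ p : ℝ × ℝ | 0 < p.2 ∧ p.2 ≤ p.1 * x }.indicator
          (fun p => ENNReal.ofReal (p.2 ^ α)) (u, y)) with hk
    have hkmeas : Measurable (Function.uncurry k) := by
      have h1 : Measurable fun p : ℝ × ℝ => ENNReal.ofReal (p.1 ^ (-α - 1)) :=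
        hmeas2.comp measurable_fst
      have h2 : Measurable fun p : ℝ × ℝ => ENNReal.ofReal (p.2 ^ α) :=
        hmeas.comp measurable_snd
      exact h1.mul (h2.indicator hS)
    have hA : ∀ u : ℝ, ENNReal.ofReal (u ^ (-α - 1)) * Hl (u * x) = ∫⁻ y, k u y ∂ν := by
      intro u
      have e1 : ∀ y : ℝ, k u y = ENNReal.ofReal (u ^ (-α - 1)) *
          (Set.Ioc 0 (u*x)).indicator (fun z => ENNReal.ofReal (z ^ α)) y := by
        intro y
        rfl
      calc ENNReal.ofReal (u ^ (-α-1)) * Hl (u*x)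
          = ENNReal.ofReal (u ^ (-α-1)) *
            ∫⁻ y, (Set.Ioc 0 (u*x)).indicator (fun z => ENNReal.ofReal (z ^ α)) y ∂ν := by
            rw [lintegral_indicator measurableSet_Ioc]
        _ = ∫⁻ y, ENNReal.ofReal (u ^ (-α-1)) *
              (Set.Ioc 0 (u*x)).indicator (fun z => ENNReal.ofReal (z ^ α)) y ∂ν :=
            (lintegral_const_mul _ (hmeas.indicator measurableSet_Ioc)).symm
        _ = ∫⁻ y, k u y ∂ν := lintegral_congr fun y => (e1 y).symm
    have hinner : ∀ y : ℝ, 0 < y → ∫⁻ u in Set.Ioi 1, k u y =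
        ENNReal.ofReal (1/α) *
          ((Set.Ioc 0 x).indicator (fun z => ENNReal.ofReal (z ^ α)) y +
            (Set.Ioi x).indicator (fun _ => ENNReal.ofReal (x ^ α)) y) := by
      intro y hy
      have e1 : ∀ u : ℝ, k u y = (Set.Ici (y/x)).indicator
          (fun u => ENNReal.ofReal (u ^ (-α-1)) * ENNReal.ofReal (y ^ α)) u := by
        intro u
        rw [hk]
        simp only [Set.indicator_apply, Set.mem_setOf_eq, Set.mem_Ici]
        by_cases h : y / x ≤ u
        · rw [if_pos h, if_pos (show 0 < y ∧ y ≤ u * x from ⟨hy, (div_le_iff₀ hx).1 h⟩)]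
        · have h2 : ¬(0 < y ∧ y ≤ u * x) := fun hc => h ((div_le_iff₀ hx).2 hc.2)
          rw [if_neg h, if_neg h2, mul_zero]
      have step1 : ∫⁻ u in Set.Ioi 1, k u y =
          ∫⁻ u in Set.Ici (y/x) ∩ Set.Ioi 1,
            ENNReal.ofReal (u ^ (-α-1)) * ENNReal.ofReal (y ^ α) := by
        rw [lintegral_congr e1, lintegral_indicator measurableSet_Ici,
          Measure.restrict_restrict measurableSet_Ici]
      rw [step1]
      by_cases hyx : y ≤ x
      · have hset : Set.Ici (y/x) ∩ Set.Ioi 1 = Set.Ioi 1 :=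
          Set.inter_eq_self_of_subset_right fun u hu =>
            le_trans ((div_le_one hx).2 hyx) (le_of_lt hu)
        rw [hset, lintegral_mul_const _ hmeas2, hpow_int 1 one_pos,
          Real.one_rpow]
        rw [Set.indicator_of_mem (Set.mem_Ioc.2 ⟨hy, hyx⟩),
          Set.indicator_of_notMem (show y ∉ Set.Ioi x by simpa using hyx)]
        rw [add_zero, mul_comm]
      · push_neg at hyx
        have hyx1 : 1 < y / x := (one_lt_div hx).2 hyx
        have hset : Set.Ici (y/x) ∩ Set.Ioi 1 = Set.Ici (y/x) :=
          Set.inter_eq_self_of_subset_left fun u hu => lt_of_lt_of_le hyx1 hu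
        have hae : volume.restrict (Set.Ici (y/x)) = volume.restrict (Set.Ioi (y/x)) :=
          Measure.restrict_congr_set (Ioi_ae_eq_Ici (a := y/x)).symm
        rw [hset, hae, lintegral_mul_const _ hmeas2,
          hpow_int (y/x) (by positivity)]
        rw [Set.indicator_of_notMem (show y ∉ Set.Ioc 0 x from fun hc => absurd hc.2 (not_le.2 hyx)),
          Set.indicator_of_mem (Set.mem_Ioi.2 hyx), zero_add]
        rw [← ENNReal.ofReal_mul (by positivity), ← ENNReal.ofReal_mul (by positivity)]
        congr 1
        have hyα : (0:ℝ) < y ^ α := Real.rpow_pos_of_pos hy α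
        have h1 : (y/x) ^ (-α) * y ^ α = x ^ α := by
          rw [Real.rpow_neg (by positivity), Real.div_rpow hy.le hx.le α]
          field_simp
        calc (y/x) ^ (-α) / α * y ^ α = ((y/x) ^ (-α) * y ^ α) / α := by ring
          _ = x ^ α / α := by rw [h1]
          _ = 1/α * x ^ α := by ring
    calc ∫⁻ u in Set.Ioi 1, ENNReal.ofReal (u ^ (-α-1)) * Hl (u*x)
        = ∫⁻ u in Set.Ioi 1, ∫⁻ y, k u y ∂ν := lintegral_congr hA
      _ = ∫⁻ y, (∫⁻ u in Set.Ioi 1, k u y) ∂ν := lintegral_lintegral_swap hkmeas.aemeasurable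
      _ = ∫⁻ y, ENNReal.ofReal (1/α) *
            ((Set.Ioc 0 x).indicator (fun z => ENNReal.ofReal (z ^ α)) y +
              (Set.Ioi x).indicator (fun _ => ENNReal.ofReal (x ^ α)) y) ∂ν :=
          lintegral_congr_ae (hposae.mono fun y hy => hinner y hy)
      _ = ENNReal.ofReal (1/α) * (Hl x + ENNReal.ofReal (x ^ α) * ν (Set.Ioi x)) := by
          rw [lintegral_const_mul _ (show Measurable fun y =>
            (Set.Ioc 0 x).indicator (fun z => ENNReal.ofReal (z ^ α)) y +
              (Set.Ioi x).indicator (fun _ => ENNReal.ofReal (x ^ α)) y from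
            (hmeas.indicator measurableSet_Ioc).add
            (measurable_const.indicator measurableSet_Ioi))]
          congr 1
          rw [lintegral_add_left (hmeas.indicator measurableSet_Ioc)]
          congr 1
          · rw [lintegral_indicator measurableSet_Ioc]
          · rw [lintegral_indicator measurableSet_Ioi, setLIntegral_const]
  -- the real-valued identity
  have hreal : ∀ x, x₀ ≤ x → ∫ u in Set.Ioi 1, u ^ (-α-1) * (H (u*x) / H x)
      = x ^ α * (1 - G x) / (α * H x) := by
    intro x hx
    have hxpos : 0 < x := lt_of_lt_of_le hx₀pos hx
    have hHx := hHpos x hx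
    have e1 : (fun u : ℝ => u ^ (-α-1) * (H (u*x) / H x))
        = fun u => (u ^ (-α-1) * H (u*x)) * (H x)⁻¹ := by
      funext u; rw [div_eq_mul_inv]; ring
    rw [e1, integral_mul_const]
    have e2 : ∫ u in Set.Ioi 1, u ^ (-α-1) * H (u*x)
        = (∫⁻ u in Set.Ioi 1, ENNReal.ofReal (u ^ (-α-1)) * Hl (u*x)).toReal := by
      rw [integral_eq_lintegral_of_nonneg_ae]
      · congr 1
        refine lintegral_congr_ae ?_
        filter_upwards [(ae_restrict_iff' measurableSet_Ioi).2
          (ae_of_all _ (fun u (hu : u ∈ Set.Ioi 1) => hu))] with u hu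
        rw [ENNReal.ofReal_mul (Real.rpow_nonneg (le_of_lt (lt_trans one_pos hu)) _)]
        congr 1
        rw [hHtoReal (u*x), ENNReal.ofReal_toReal (hHl_fin _)]
      · refine (ae_restrict_iff' measurableSet_Ioi).2 (ae_of_all _ fun u hu => ?_)
        exact mul_nonneg (Real.rpow_nonneg (le_of_lt (lt_trans one_pos hu)) _) (hHnn _)
      · exact (hrpm2.mul (hHmeas.comp (measurable_id.mul_const x))).aestronglyMeasurable
    rw [e2, hstar x hxpos]
    have e3 : (ENNReal.ofReal (1/α) * (Hl x + ENNReal.ofReal (x ^ α) * ν (Set.Ioi x))).toReal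
        = (1/α) * (H x + x ^ α * (ν (Set.Ioi x)).toReal) := by
      rw [ENNReal.toReal_mul, ENNReal.toReal_add (hHl_fin x) (by finiteness),
        ENNReal.toReal_mul, ENNReal.toReal_ofReal (by positivity),
        ENNReal.toReal_ofReal (Real.rpow_nonneg hxpos.le _), hHtoReal x]
    rw [e3]
    have e4 : x ^ α * (1 - G x) = x ^ α * (ν (Set.Ioi x)).toReal + H x := by
      rw [h1G x, mul_add]
      congr 1
      rw [← mul_assoc, ← Real.rpow_add hxpos]
      simp
    rw [e4]
    field_simp
    ring
  -- limit of the target integral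
  have hlim_int : ∫ u in Set.Ioi 1, u ^ (θ - α - 1) = 1/(α - θ) := by
    rw [integral_Ioi_rpow_of_lt (by linarith) one_pos, Real.one_rpow,
      show θ - α - 1 + 1 = θ - α from by ring]
    have h1 : θ - α = -(α-θ) := by ring
    rw [h1, div_neg]
    ring
  -- dominated convergence
  have hDCT : Tendsto (fun x => ∫ u in Set.Ioi 1, u ^ (-α-1) * (H (u*x) / H x))
      atTop (nhds (1/(α-θ))) := by
    rw [← hlim_int]
    refine tendsto_integral_filter_of_dominated_convergence
      (fun u => q * u ^ (θ' - α - 1)) ?_ ?_ ?_ ?_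
    · filter_upwards [eventually_ge_atTop x₀] with x hx
      exact ((hrpm2.mul ((hHmeas.comp (measurable_id.mul_const x)).div_const
        (H x)))).aestronglyMeasurable
    · filter_upwards [eventually_ge_atTop x₀] with x hx
      refine (ae_restrict_iff' measurableSet_Ioi).2 (ae_of_all _ fun u hu => ?_)
      have hu1 : (1:ℝ) ≤ u := le_of_lt hu
      have hupos : (0:ℝ) < u := lt_of_lt_of_le one_pos hu1
      have hHx := hHpos x hx
      have hb : H (u*x) / H x ≤ q * u ^ θ' :=
        (div_le_iff₀ hHx).2 (hpotter x hx u hu1)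
      have hnn : 0 ≤ u ^ (-α-1) * (H (u*x)/H x) :=
        mul_nonneg (Real.rpow_nonneg hupos.le _) (div_nonneg (hHnn _) hHx.le)
      rw [Real.norm_eq_abs, abs_of_nonneg hnn]
      calc u ^ (-α-1) * (H (u*x)/H x) ≤ u ^ (-α-1) * (q * u ^ θ') :=
            mul_le_mul_of_nonneg_left hb (Real.rpow_nonneg hupos.le _)
        _ = q * (u ^ (-α-1) * u ^ θ') := by ring
        _ = q * u ^ (θ' - α - 1) := by
            rw [← Real.rpow_add hupos, show -α-1+θ' = θ'-α-1 from by ring]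
    · exact (integrableOn_Ioi_rpow_of_lt (by linarith) one_pos).const_mul q
    · refine (ae_restrict_iff' measurableSet_Ioi).2 (ae_of_all _ fun u hu => ?_)
      have hupos : (0:ℝ) < u := lt_trans one_pos hu
      have h1 : Tendsto (fun t => H (t * u) / H t) atTop (nhds (u ^ θ)) := hRV u hupos
      have h2 : Tendsto (fun t => H (u * t) / H t) atTop (nhds (u ^ θ)) :=
        h1.congr fun t => by rw [mul_comm]
      have h3 := h2.const_mul (u ^ (-α-1))
      rw [show u ^ (-α-1) * u ^ θ = u ^ (θ - α - 1) from by
        rw [← Real.rpow_add hupos, show -α-1+θ = θ-α-1 from by ring]] at h3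
      exact h3
  -- conclude
  have hW : Tendsto (fun x => x ^ α * (1 - G x) / (α * H x)) atTop (nhds (1/(α-θ))) := by
    refine hDCT.congr' ?_
    filter_upwards [eventually_ge_atTop x₀] with x hx
    exact hreal x hx
  have hαθ : α - θ ≠ 0 := by linarith
  have hE : Tendsto (fun x => H x / (x ^ α * (1 - G x))) atTop (nhds ((α - θ)/α)) := by
    have h1 : Tendsto (fun x => x ^ α * (1 - G x) / H x) atTop (nhds (α/(α-θ))) := by
      have h := hW.const_mul α
      rw [show α * (1/(α-θ)) = α/(α-θ) from by ring] at h
      refine h.congr fun x => ?_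
      rw [mul_div_assoc', mul_div_mul_left _ _ hα0]
    have h2 := h1.inv₀ (div_ne_zero hα0 hαθ)
    rw [inv_div] at h2
    refine h2.congr fun x => ?_
    rw [inv_div]
  have hfinal : ∀ᶠ x in atTop, x ^ (-α) * R x * H x
      = G x * (H x / (x ^ α * (1 - G x))) + (H x / (x ^ α * (1 - G x)))^2 := by
    filter_upwards [eventually_ge_atTop x₀] with x hx
    have hxpos : 0 < x := lt_of_lt_of_le hx₀pos hx
    have hHx := hHpos x hx
    have hP : 0 < x ^ α := Real.rpow_pos_of_pos hxpos _
    have hD : 0 < 1 - G x := by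
      rw [h1G x]
      have h1 : 0 < x ^ (-α) * H x := mul_pos (Real.rpow_pos_of_pos hxpos _) hHx
      have h2 : 0 ≤ (ν (Set.Ioi x)).toReal := ENNReal.toReal_nonneg
      linarith
    rw [hR x, Real.rpow_neg hxpos.le α]
    field_simp
  have hcomb : Tendsto
      (fun x => G x * (H x / (x ^ α * (1 - G x))) + (H x / (x ^ α * (1 - G x)))^2)
      atTop (nhds (1 * ((α-θ)/α) + ((α-θ)/α)^2)) := (hGtend.mul hE).add (hE.pow 2)
  have hvalue : 1 * ((α-θ)/α) + ((α-θ)/α)^2 = (α-θ)*(2*α-θ)/α^2 := by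
    field_simp
    ring
  rw [hvalue] at hcomb
  exact Tendsto.congr' (EventuallyEq.symm hfinal) hcomb
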